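/- Let Ω ⊆ 𝔻 be a nonempty connected open set and A : ℂ[z] → 𝒜(𝔻) linear of rank at least 2 with A(𝒫(𝔻)) ⊆ 𝒮(Ω) ∪ {0}. Write ψ_n = A(z^n). Then for each n ≥ 1: (1) if ψ_n is not a scalar multiple of ψ₀, then |ψ_n(z)| < |ψ₀(z)| for every z ∈ Ω; (2) if ψ_n = α·ψ₀ for some α ∈ ℂ, then |α| < 3. -/

import Mathlib

open Metric Polynomial

/-- Bounds on the moments ψₙ = A(zⁿ) of a stability-transforming operator of rank ≥ 2. -/
theorem stmt_15 (Ω : Set ℂ) (hΩsub : Ω ⊆ ball (0:ℂ) 1) (hΩne : Ω.Nonempty)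
    (hΩopen : IsOpen Ω) (hΩconn : IsConnected Ω)
    (A : Polynomial ℂ →ₗ[ℂ] (ℂ → ℂ))
    (hA : ∀ p : Polynomial ℂ, DifferentiableOn ℂ (A p) (ball (0:ℂ) 1))
    (hstab : ∀ p : Polynomial ℂ, (∀ z ∈ ball (0:ℂ) 1, Polynomial.eval z p ≠ 0) →
      ((∀ z ∈ ball (0:ℂ) 1, A p z = 0) ∨ (∀ z ∈ Ω, A p z ≠ 0)))
    (hrank2 : ∃ p q : Polynomial ℂ, ∀ c d : ℂ, (c ≠ 0 ∨ d ≠ 0) →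
      ∃ z ∈ ball (0:ℂ) 1, c * A p z + d * A q z ≠ 0) :
    ∀ n : ℕ, 1 ≤ n →
      ((¬ ∃ α : ℂ, ∀ z ∈ ball (0:ℂ) 1, A (X ^ n) z = α * A 1 z) →
        ∀ z ∈ Ω, ‖A (X ^ n) z‖ < ‖A 1 z‖) ∧
      (∀ α : ℂ, (∀ z ∈ ball (0:ℂ) 1, A (X ^ n) z = α * A 1 z) → ‖α‖ < 3) := by
  obtain ⟨z₀, hz₀⟩ := hΩne
  have hz₀ball : z₀ ∈ ball (0:ℂ) 1 := hΩsub hz₀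
  have happ : ∀ (p q : Polynomial ℂ) (z : ℂ), A (p + q) z = A p z + A q z := by
    intro p q z; rw [map_add]; rfl
  have hsmul : ∀ (c : ℂ) (p : Polynomial ℂ) (z : ℂ), A (c • p) z = c * A p z := by
    intro c p z; rw [map_smul]; rfl
  have hC : ∀ a : ℂ, (C a : Polynomial ℂ) = a • (1 : Polynomial ℂ) := by
    intro a; rw [smul_eq_C_mul, mul_one]
  have hbound : ∀ (p : Polynomial ℂ) (z : ℂ), z ∈ ball (0:ℂ) 1 →
      ‖eval z p‖ ≤ ∑ i ∈ p.support, ‖p.coeff i‖ := by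
    intro p z hz
    rw [mem_ball, dist_zero_right] at hz
    rw [Polynomial.eval_eq_sum, Polynomial.sum]
    refine (norm_sum_le _ _).trans (Finset.sum_le_sum fun i _ => ?_)
    rw [norm_mul, norm_pow]
    have h1 : ‖z‖ ^ i ≤ 1 := pow_le_one₀ (norm_nonneg _) hz.le
    calc ‖p.coeff i‖ * ‖z‖ ^ i ≤ ‖p.coeff i‖ * 1 := by gcongr
      _ = ‖p.coeff i‖ := mul_one _
  -- identity theorem
  have hid : ∀ f : ℂ → ℂ, DifferentiableOn ℂ f (ball (0:ℂ) 1) → (∀ z ∈ Ω, f z = 0) →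
      ∀ z ∈ ball (0:ℂ) 1, f z = 0 := by
    intro f hf h0 z hz
    have han : AnalyticOnNhd ℂ f (ball (0:ℂ) 1) := hf.analyticOnNhd isOpen_ball
    have := han.eqOn_zero_of_preconnected_of_eventuallyEq_zero
      ((convex_ball (0:ℂ) 1).isPreconnected) hz₀ball
      (Filter.eventuallyEq_of_mem (hΩopen.mem_nhds hz₀) fun w hw => h0 w hw)
    exact this hz
  -- ψ₀ is not identically zero on the disc
  have hpsi0 : ¬ ∀ z ∈ ball (0:ℂ) 1, A 1 z = 0 := by
    intro hzero
    have hCz : ∀ (c : ℂ) (z : ℂ), z ∈ ball (0:ℂ) 1 → A (C c) z = 0 := by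
      intro c z hz; rw [hC, hsmul, hzero z hz, mul_zero]
    have hAll : ∀ p : Polynomial ℂ,
        (∀ z ∈ ball (0:ℂ) 1, A p z = 0) ∨ (∀ z ∈ Ω, A p z ≠ 0) := by
      intro p
      set S := ∑ i ∈ p.support, ‖p.coeff i‖ with hS
      have hstable : ∀ z ∈ ball (0:ℂ) 1, eval z (p + C ((S+1 : ℝ) : ℂ)) ≠ 0 := by
        intro z hz h0'
        rw [eval_add, eval_C] at h0'
        have h1 : eval z p = -((S:ℂ)+1) := by push_cast at h0'; linear_combination h0'
        have h2 := hbound p z hz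
        rw [h1] at h2
        have h3 : ‖-(((S:ℝ):ℂ)+1)‖ = S + 1 := by
          rw [norm_neg]
          have : (((S:ℝ):ℂ)+1) = ((S+1 : ℝ) : ℂ) := by push_cast; ring
          have hSnn : (0:ℝ) ≤ S := Finset.sum_nonneg fun i _ => norm_nonneg _
          rw [this, Complex.norm_real, Real.norm_eq_abs, abs_of_nonneg (by linarith)]
        rw [h3] at h2
        linarith
      rcases hstab _ hstable with h | h
      · left; intro z hz
        have := h z hz; rwa [happ, hCz _ z hz, add_zero] at this
      · right; intro z hz
        have := h z hz; rwa [happ, hCz _ z (hΩsub hz), add_zero] at this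
    obtain ⟨p, q, hpq⟩ := hrank2
    have hpΩ : ∀ z ∈ Ω, A p z = 0 := by
      intro w hw
      by_contra hne
      obtain ⟨z₁, hz₁, hne₁⟩ := hpq (A q w) (-(A p w)) (Or.inr (neg_ne_zero.mpr hne))
      have hrapp : ∀ z : ℂ, A ((A q w) • p + (-(A p w)) • q) z
          = A q w * A p z + (-(A p w)) * A q z := by
        intro z; rw [happ, hsmul, hsmul]
      rcases hAll ((A q w) • p + (-(A p w)) • q) with h | h
      · apply hne₁
        have := h z₁ hz₁; rw [hrapp] at this; linear_combination this
      · exact h w hw (by rw [hrapp]; ring)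
    have hpball : ∀ z ∈ ball (0:ℂ) 1, A p z = 0 := hid (A p) (hA p) hpΩ
    obtain ⟨z₂, hz₂, hne₂⟩ := hpq 1 0 (Or.inl one_ne_zero)
    exact hne₂ (by rw [hpball z₂ hz₂]; ring)
  -- ψ₀ does not vanish on Ω
  have hψΩ : ∀ z ∈ Ω, A 1 z ≠ 0 := by
    have h1 : ∀ z ∈ ball (0:ℂ) 1, eval z (1 : Polynomial ℂ) ≠ 0 := by simp
    rcases hstab 1 h1 with h | h
    · exact absurd h hpsi0
    · exact h
  -- key strict inequality
  have key : ∀ m : ℕ, 1 ≤ m →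
      (¬ ∃ α : ℂ, ∀ z ∈ ball (0:ℂ) 1, A (X^m) z = α * A 1 z) →
      ∀ z ∈ Ω, ‖A (X^m) z‖ < ‖A 1 z‖ := by
    intro m hm hnot z hz
    have h0 := hψΩ z hz
    by_contra hge
    push_neg at hge
    set a : ℂ := -(A (X^m) z / A 1 z) with ha
    have hanorm : (1:ℝ) ≤ ‖a‖ := by
      rw [ha, norm_neg, norm_div]
      rw [one_le_div (norm_pos_iff.mpr h0)]
      exact hge
    have hstable : ∀ w ∈ ball (0:ℂ) 1, eval w (X^m + C a) ≠ 0 := by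
      intro w hw h0'
      rw [mem_ball, dist_zero_right] at hw
      simp only [eval_add, eval_pow, eval_X, eval_C] at h0'
      have h2 : ‖w‖^m < 1 := pow_lt_one₀ (norm_nonneg _) hw (Nat.one_le_iff_ne_zero.mp hm)
      have h3 : a = -w^m := by linear_combination h0'
      rw [h3, norm_neg, norm_pow] at hanorm
      linarith
    rcases hstab _ hstable with h | h
    · refine hnot ⟨-a, fun w hw => ?_⟩
      have := h w hw; rw [happ, hC, hsmul] at this
      linear_combination this
    · apply h z hz
      rw [happ, hC, hsmul, ha]
      field_simp
      ring
  -- there is a moment not proportional to ψ₀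
  have hexm : ∃ m : ℕ, 1 ≤ m ∧
      ¬ ∃ α : ℂ, ∀ z ∈ ball (0:ℂ) 1, A (X^m) z = α * A 1 z := by
    by_contra hall
    push_neg at hall
    have hmul : ∀ p : Polynomial ℂ, ∃ l : ℂ, ∀ z ∈ ball (0:ℂ) 1, A p z = l * A 1 z := by
      intro p
      induction p using Polynomial.induction_on' with
      | add p q hp hq =>
        obtain ⟨lp, hlp⟩ := hp; obtain ⟨lq, hlq⟩ := hq
        exact ⟨lp + lq, fun z hz => by rw [happ, hlp z hz, hlq z hz]; ring⟩
      | monomial k c =>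
        rcases Nat.eq_zero_or_pos k with h0 | h1
        · refine ⟨c, fun z hz => ?_⟩
          rw [h0, monomial_zero_left, hC, hsmul]
        · obtain ⟨α, hα⟩ := hall k h1
          refine ⟨c * α, fun z hz => ?_⟩
          rw [show (monomial k c : Polynomial ℂ) = c • X^k by
            rw [← C_mul_X_pow_eq_monomial, ← smul_eq_C_mul]]
          rw [hsmul, hα z hz, mul_assoc]
    obtain ⟨p, q, hpq⟩ := hrank2
    obtain ⟨lp, hlp⟩ := hmul p
    obtain ⟨lq, hlq⟩ := hmul q
    by_cases hlp0 : lp = 0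
    · obtain ⟨z₁, hz₁, hne⟩ := hpq 1 0 (Or.inl one_ne_zero)
      exact hne (by rw [hlp z₁ hz₁, hlp0]; ring)
    · obtain ⟨z₁, hz₁, hne⟩ := hpq lq (-lp) (Or.inr (neg_ne_zero.mpr hlp0))
      exact hne (by rw [hlp z₁ hz₁, hlq z₁ hz₁]; ring)
  -- conclusion
  intro n hn
  refine ⟨key n hn, ?_⟩
  intro α hα
  by_contra h3
  push_neg at h3
  obtain ⟨m, hm1, hmnot⟩ := hexm
  have hmlt := key m hm1 hmnot z₀ hz₀
  have h0 := hψΩ z₀ hz₀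
  set b : ℂ := -(A (X^m) z₀ / A 1 z₀) with hb
  have hbnorm : ‖b‖ < 1 := by
    rw [hb, norm_neg, norm_div]
    rw [div_lt_one (norm_pos_iff.mpr h0)]
    exact hmlt
  have hdiff : 2 < ‖b - α‖ := by
    have h4 : ‖α‖ - ‖b‖ ≤ ‖α - b‖ := norm_sub_norm_le α b
    rw [norm_sub_rev] at h4
    linarith
  have hstable : ∀ w ∈ ball (0:ℂ) 1, eval w (X^m + X^n + C (b - α)) ≠ 0 := by
    intro w hw h0'
    rw [mem_ball, dist_zero_right] at hw
    simp only [eval_add, eval_pow, eval_X, eval_C] at h0'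
    have h2 : ‖w‖^m < 1 := pow_lt_one₀ (norm_nonneg _) hw (Nat.one_le_iff_ne_zero.mp hm1)
    have h3' : ‖w‖^n < 1 := pow_lt_one₀ (norm_nonneg _) hw (Nat.one_le_iff_ne_zero.mp hn)
    have h5 : b - α = -(w^m + w^n) := by linear_combination h0'
    have h4 : ‖b - α‖ ≤ ‖w‖^m + ‖w‖^n := by
      rw [h5, norm_neg]
      exact (norm_add_le _ _).trans (by rw [norm_pow, norm_pow])
    linarith
  have happ3 : ∀ w ∈ ball (0:ℂ) 1,
      A (X^m + X^n + C (b - α)) w = A (X^m) w + b * A 1 w := by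
    intro w hw
    rw [happ, happ, hC, hsmul, hα w hw]; ring
  rcases hstab _ hstable with h | h
  · refine hmnot ⟨-b, fun w hw => ?_⟩
    have := h w hw; rw [happ3 w hw] at this
    linear_combination this
  · apply h z₀ hz₀
    rw [happ3 z₀ (hΩsub hz₀), hb]
    field_simp
    ring
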